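/- Let H be a subspace of a finite-dimensional inner product space V, let D be a symmetric endomorphism of V, and suppose there is λ₀ < 0 such that every s ∈ H satisfies (i) ⟨Ds,s⟩ ≥ λ₀‖s‖² and (ii) s is in the sum of eigenspaces of D with negative eigenvalues. Then dim H ≤ N_{D²}(λ₀²), the number of eigenvalues μ of D² (with multiplicity) satisfying μ ≤ λ₀². -/

import Mathlib

open scoped InnerProductSpace

open Module

set_option maxHeartbeats 1000000

/-- If `H` is a subspace of a finite-dimensional inner product
space, `D` symmetric, `λ₀ < 0`, and every `s ∈ H` satisfies
`⟨Ds,s⟩ ≥ λ₀‖s‖²` and lies in the sum of negative eigenspaces of `D`, then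
`dim H ≤ N_{D²}(λ₀²)`, the dimension of the sum of eigenspaces of `D²` with
eigenvalue `≤ λ₀²`. -/
theorem dim_bound_by_counting
    {V : Type*} [NormedAddCommGroup V] [InnerProductSpace ℝ V]
    [FiniteDimensional ℝ V]
    (D : V →ₗ[ℝ] V) (hD : LinearMap.IsSymmetric D)
    (H : Submodule ℝ V) (lam0 : ℝ) (hlam0 : lam0 < 0)
    (hQ : ∀ s ∈ H, lam0 * ‖s‖ ^ 2 ≤ ⟪D s, s⟫_ℝ)
    (hneg : ∀ s ∈ H, s ∈ ⨆ (μ : ℝ) (_ : μ < 0), Module.End.eigenspace D μ) :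
    Module.finrank ℝ H ≤
      Module.finrank ℝ
        ↥(⨆ (μ : ℝ) (_ : μ ≤ lam0 ^ 2), Module.End.eigenspace (D ∘ₗ D) μ) := by
  classical
  set Kneg : Submodule ℝ V := ⨆ (μ : ℝ) (_ : μ < lam0), Module.End.eigenspace D μ with hKneg
  set K : Submodule ℝ V := ⨆ (μ : ℝ) (_ : lam0 ≤ μ ∧ μ < 0), Module.End.eigenspace D μ with hK
  set Tgt : Submodule ℝ V :=
    ⨆ (μ : ℝ) (_ : μ ≤ lam0 ^ 2), Module.End.eigenspace (D ∘ₗ D) μ with hTgt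
  -- Kneg is D-invariant
  have hinv : ∀ x ∈ Kneg, D x ∈ Kneg := by
    intro x hx
    refine Submodule.iSup_induction
      (fun μ : ℝ => ⨆ (_ : μ < lam0), Module.End.eigenspace D μ)
      (motive := fun x => D x ∈ Kneg) hx ?_ (by simp) ?_
    · intro μ y hy
      have hy' : y ∈ ⨆ (_ : μ < lam0), Module.End.eigenspace D μ := hy
      by_cases h : μ < lam0
      · rw [iSup_pos h] at hy'
        have hy := hy'
        have hDy : D y = μ • y := Module.End.mem_eigenspace_iff.mp hy
        rw [hDy]
        exact Submodule.smul_mem _ _ (Submodule.mem_iSup_of_mem μ (by rw [iSup_pos h]; exact hy))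
      · rw [iSup_neg h] at hy'
        have : y = 0 := by simpa using hy'
        simp [this]
    · intro y z hy hz
      rw [map_add]; exact Submodule.add_mem _ hy hz
  -- key strict inequality on Kneg
  have key : ∀ s ∈ Kneg, s ≠ 0 → ⟪D s, s⟫_ℝ < lam0 * ‖s‖ ^ 2 := by
    intro s hs hs0
    haveI : Nontrivial Kneg := ⟨⟨⟨s, hs⟩, 0, by simpa using hs0⟩⟩
    set T : Kneg →ₗ[ℝ] Kneg := D.restrict hinv with hT
    have hTsymm : T.IsSymmetric := hD.restrict_invariant hinv
    have hn : finrank ℝ Kneg = finrank ℝ Kneg := rfl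
    set b := hTsymm.eigenvectorBasis hn with hb
    set ev := hTsymm.eigenvalues hn with hev
    -- every eigenvalue of T is < lam0
    have hevlt : ∀ i, ev i < lam0 := by
      intro i
      by_contra hcon
      push_neg at hcon
      have hv := hTsymm.hasEigenvector_eigenvectorBasis hn i
      set v : Kneg := b i with hvdef
      have hv0 : (v : V) ≠ 0 := by
        intro hc
        exact hv.2 (by exact_mod_cast Subtype.coe_injective hc)
      have hDv : (v : V) ∈ Module.End.eigenspace D (ev i) := by
        rw [Module.End.mem_eigenspace_iff]
        have h1 : T v = (ev i) • v := Module.End.mem_eigenspace_iff.mp hv.1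
        have := congrArg (Subtype.val) h1
        simpa [hT, LinearMap.restrict_coe_apply] using this
      have hdisj := (Module.End.eigenspaces_iSupIndep D) (ev i)
      have hle : Kneg ≤ ⨆ (ν : ℝ) (_ : ν ≠ ev i), Module.End.eigenspace D ν := by
        refine iSup₂_le fun ν hν => ?_
        exact le_iSup₂ (f := fun ν _ => Module.End.eigenspace D ν) ν
          (by intro hc; rw [hc] at hν; exact absurd hν (not_lt.mpr hcon))
      exact hv0 (Submodule.disjoint_def.mp hdisj _ hDv (hle v.2))
    set σ : Kneg := ⟨s, hs⟩ with hσ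
    have hσ0 : σ ≠ 0 := by simpa [hσ, Submodule.mk_eq_zero] using hs0
    have hexp : ⟪T σ, σ⟫_ℝ = ∑ i, ev i * ⟪(b i : Kneg), σ⟫_ℝ ^ 2 := by
      rw [← b.sum_inner_mul_inner (T σ) σ]
      refine Finset.sum_congr rfl fun i _ => ?_
      have h2 : T (b i) = ev i • b i := by
        exact_mod_cast hTsymm.apply_eigenvectorBasis hn i
      have h3 : ⟪T σ, b i⟫_ℝ = ev i * ⟪b i, σ⟫_ℝ := by
        rw [hTsymm σ (b i), h2, real_inner_smul_right, real_inner_comm]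
      rw [h3]; ring
    have hnorm : ∑ i, ⟪(b i : Kneg), σ⟫_ℝ ^ 2 = ‖σ‖ ^ 2 := by
      have := b.sum_inner_mul_inner σ σ
      rw [real_inner_self_eq_norm_sq] at this
      rw [← this]
      refine Finset.sum_congr rfl fun i _ => ?_
      rw [real_inner_comm]; ring
    have hexists : ∃ i, ⟪(b i : Kneg), σ⟫_ℝ ≠ 0 := by
      by_contra hcon
      push_neg at hcon
      have : ‖σ‖ ^ 2 = 0 := by
        rw [← hnorm]
        exact Finset.sum_eq_zero fun i _ => by rw [hcon i]; ring
      exact hσ0 (norm_eq_zero.mp (by nlinarith [norm_nonneg σ]))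
    obtain ⟨i₀, hi₀⟩ := hexists
    have hlt : ∑ i, ev i * ⟪(b i : Kneg), σ⟫_ℝ ^ 2
        < ∑ i, lam0 * ⟪(b i : Kneg), σ⟫_ℝ ^ 2 := by
      refine Finset.sum_lt_sum (fun i _ => ?_) ⟨i₀, Finset.mem_univ _, ?_⟩
      · exact mul_le_mul_of_nonneg_right (hevlt i).le (sq_nonneg _)
      · exact mul_lt_mul_of_pos_right (hevlt i₀) (by positivity)
    have hDs : ⟪D s, s⟫_ℝ = ⟪T σ, σ⟫_ℝ := rfl
    have hns : ‖σ‖ = ‖s‖ := rfl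
    calc ⟪D s, s⟫_ℝ = ∑ i, ev i * ⟪(b i : Kneg), σ⟫_ℝ ^ 2 := by rw [hDs, hexp]
      _ < ∑ i, lam0 * ⟪(b i : Kneg), σ⟫_ℝ ^ 2 := hlt
      _ = lam0 * ‖s‖ ^ 2 := by rw [← Finset.mul_sum, hnorm, hns]
  -- H and Kneg are disjoint
  have hdisj : Disjoint H Kneg := by
    rw [Submodule.disjoint_def]
    intro s hsH hsK
    by_contra hs0
    exact absurd (hQ s hsH) (not_le.mpr (key s hsK hs0))
  -- H ≤ Kneg ⊔ K
  have hHle : H ≤ Kneg ⊔ K := by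
    intro s hsH
    have hsub : (⨆ (μ : ℝ) (_ : μ < 0), Module.End.eigenspace D μ) ≤ Kneg ⊔ K := by
      refine iSup₂_le fun μ hμ => ?_
      rcases lt_or_ge μ lam0 with h | h
      · exact le_trans (le_iSup₂ (f := fun (ν : ℝ) (_ : ν < lam0) => Module.End.eigenspace D ν) μ h) le_sup_left
      · exact le_trans (le_iSup₂ (f := fun (ν : ℝ) (_ : lam0 ≤ ν ∧ ν < 0) => Module.End.eigenspace D ν) μ ⟨h, hμ⟩)
          le_sup_right
    exact hsub (hneg s hsH)
  -- K ≤ Tgt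
  have hKle : K ≤ Tgt := by
    refine iSup₂_le fun μ hμ => ?_
    have h1 : Module.End.eigenspace D μ ≤ Module.End.eigenspace (D ∘ₗ D) (μ ^ 2) := by
      intro x hx
      rw [Module.End.mem_eigenspace_iff] at hx ⊢
      rw [LinearMap.comp_apply, hx, map_smul, hx, smul_smul, sq]
    have h2 : μ ^ 2 ≤ lam0 ^ 2 := by nlinarith [hμ.1, hμ.2]
    exact le_trans h1
      (le_iSup₂ (f := fun (ν : ℝ) (_ : ν ≤ lam0 ^ 2) => Module.End.eigenspace (D ∘ₗ D) ν) (μ ^ 2) h2)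
  -- finrank bookkeeping
  have h1 : finrank ℝ H + finrank ℝ Kneg = finrank ℝ ↥(H ⊔ Kneg) := by
    rw [← Submodule.finrank_sup_add_finrank_inf_eq H Kneg, hdisj.eq_bot, finrank_bot, add_zero]
  have h2 : finrank ℝ ↥(H ⊔ Kneg) ≤ finrank ℝ ↥(Kneg ⊔ K) :=
    Submodule.finrank_mono (sup_le (le_trans hHle le_rfl) le_sup_left)
  have h3 : finrank ℝ ↥(Kneg ⊔ K) ≤ finrank ℝ Kneg + finrank ℝ K := by
    have := Submodule.finrank_sup_add_finrank_inf_eq Kneg K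
    omega
  have h4 : finrank ℝ K ≤ finrank ℝ Tgt := Submodule.finrank_mono hKle
  omega
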